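/- Let Q_1, …, Q_n be pairwise commuting orthogonal projections on a complex Hilbert space H, and let R_1, …, R_n be orthogonal projections on H such that R_j Q_i = Q_i R_j for all 1 ≤ i, j ≤ n. Assume that for every subset S ⊆ {1, …, n} the operator Σ_{j ∈ S} R_j has closed range. Then the operator Q_1 R_1 + ⋯ + Q_n R_n has closed range; equivalently, the algebraic sum of the closed subspaces ran(Q_1) ∩ ran(R_1), …, ran(Q_n) ∩ ran(R_n) is closed. -/

import Mathlib

open scoped InnerProductSpace
set_option linter.unusedSectionVars false
set_option maxHeartbeats 1000000



section Aux
variable {H : Type*} [NormedAddCommGroup H] [InnerProductSpace ℂ H] [CompleteSpace H]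

lemma aux_fixed {p : H →L[ℂ] H} (hp : IsIdempotentElem p) {x : H}
    (hx : x ∈ LinearMap.range (p : H →ₗ[ℂ] H)) : p x = x := by
  obtain ⟨y, rfl⟩ := hx
  have := congrArg (fun T : H →L[ℂ] H => T y) hp
  simpa using this

lemma aux_idem_range_closed {p : H →L[ℂ] H} (hp : IsIdempotentElem p) :
    IsClosed (Set.range ⇑p) := by
  have h1 : Set.range ⇑p = {x | p x = x} := by
    ext x
    constructor
    · rintro ⟨y, rfl⟩
      exact aux_fixed hp ⟨y, rfl⟩
    · intro hx; exact ⟨x, hx⟩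
  rw [h1]
  exact isClosed_eq p.continuous continuous_id

lemma aux_sa_inner {T : H →L[ℂ] H} (hT : IsSelfAdjoint T) (x y : H) :
    ⟪T x, y⟫_ℂ = ⟪x, T y⟫_ℂ := by
  have h := ContinuousLinearMap.isSelfAdjoint_iff'.mp hT
  rw [← h, ContinuousLinearMap.adjoint_inner_left]
  rw [h]

lemma aux_orth_range {T : H →L[ℂ] H} (hT : IsSelfAdjoint T) :
    (LinearMap.range (T : H →ₗ[ℂ] H))ᗮ = LinearMap.ker (T : H →ₗ[ℂ] H) := by
  ext y
  rw [Submodule.mem_orthogonal]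
  constructor
  · intro h
    have h2 : ∀ x : H, ⟪x, T y⟫_ℂ = 0 := fun x => by
      rw [← aux_sa_inner hT]; exact h _ ⟨x, rfl⟩
    have := h2 (T y)
    rw [inner_self_eq_zero] at this
    exact LinearMap.mem_ker.mpr this
  · intro h u hu
    obtain ⟨x, rfl⟩ := hu
    rw [ContinuousLinearMap.coe_coe, aux_sa_inner hT, show T y = 0 from LinearMap.mem_ker.mp h, inner_zero_right]

lemma aux_range_eq_ker_orth {T : H →L[ℂ] H} (hT : IsSelfAdjoint T)
    (hc : IsClosed (Set.range ⇑T)) :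
    LinearMap.range (T : H →ₗ[ℂ] H) = (LinearMap.ker (T : H →ₗ[ℂ] H))ᗮ := by
  have hcl : IsClosed ((LinearMap.range (T : H →ₗ[ℂ] H) : Submodule ℂ H) : Set H) := by
    rwa [LinearMap.coe_range]
  haveI : CompleteSpace (LinearMap.range (T : H →ₗ[ℂ] H)) := hcl.completeSpace_coe
  rw [← aux_orth_range hT, Submodule.orthogonal_orthogonal]

end Aux


section Aux2
variable {H : Type*} [NormedAddCommGroup H] [InnerProductSpace ℂ H] [CompleteSpace H]

lemma aux_sup_closed {K L : Submodule ℂ H} (hK : IsClosed (K : Set H))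
    (hL : IsClosed (L : Set H)) (hKL : L ≤ Kᗮ) :
    IsClosed ((K ⊔ L : Submodule ℂ H) : Set H) := by
  haveI : CompleteSpace K := hK.completeSpace_coe
  apply IsSeqClosed.isClosed
  intro u z hu hz
  have hdec : ∀ k, ∃ x ∈ K, ∃ y ∈ L, x + y = u k := fun k =>
    Submodule.mem_sup.mp (hu k)
  choose x hx y hy hxy using hdec
  set f : H →L[ℂ] H := K.subtypeL ∘L K.orthogonalProjectionOnto with hf
  have hfx : ∀ k, f (u k) = x k := by
    intro k
    rw [← hxy k]
    simp only [hf, ContinuousLinearMap.comp_apply, map_add]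
    rw [Submodule.orthogonalProjectionOnto_mem_subspace_eq_self ⟨x k, hx k⟩,
      Submodule.orthogonalProjectionOnto_apply_of_mem_orthogonal (hKL (hy k))]
    simp
  have hxlim : Filter.Tendsto x Filter.atTop (nhds (f z)) := by
    have h2 := (f.continuous.tendsto z).comp hz
    have h3 : ⇑f ∘ u = x := funext hfx
    rwa [Function.comp_def, show (fun k => f (u k)) = x from funext hfx] at h2
  have hylim : Filter.Tendsto y Filter.atTop (nhds (z - f z)) := by
    have h4 : y = fun k => u k - x k := funext fun k => by rw [← hxy k]; abel
    rw [h4]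
    exact hz.sub hxlim
  have hzK : f z ∈ K := by simp [hf]
  have hzL : z - f z ∈ L := hL.isSeqClosed (fun k => hy k) hylim
  exact Submodule.mem_sup.mpr ⟨f z, hzK, z - f z, hzL, by abel⟩

lemma aux_orthsum_closed {ι : Type*} [DecidableEq ι] (s : Finset ι) (W : ι → Submodule ℂ H)
    (hW : ∀ i ∈ s, IsClosed ((W i : Submodule ℂ H) : Set H))
    (horth : ∀ i ∈ s, ∀ j ∈ s, i ≠ j → W i ≤ (W j)ᗮ) :
    IsClosed ((∑ i ∈ s, W i : Submodule ℂ H) : Set H) := by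
  induction s using Finset.cons_induction with
  | empty => simpa using isClosed_singleton
  | cons a s ha ih =>
    rw [Finset.sum_cons, Submodule.add_eq_sup]
    apply aux_sup_closed (hW a (Finset.mem_cons_self a s))
    · exact ih (fun i hi => hW i (Finset.mem_cons_of_mem hi))
        (fun i hi j hj hij => horth i (Finset.mem_cons_of_mem hi) j (Finset.mem_cons_of_mem hj) hij)
    · apply Finset.sum_induction _ (fun N => N ≤ (W a)ᗮ)
      · intro p q hp hq; rw [Submodule.add_eq_sup]; exact sup_le hp hq
      · exact bot_le
      · intro i hi
        exact horth i (Finset.mem_cons_of_mem hi) a (Finset.mem_cons_self a s)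
          (fun h => ha (h ▸ hi))

lemma aux_le_finsum {ι : Type*} {s : Finset ι} {N : ι → Submodule ℂ H} {i : ι} (hi : i ∈ s) :
    N i ≤ ∑ j ∈ s, N j := by
  classical
  induction s using Finset.cons_induction with
  | empty => exact absurd hi (Finset.notMem_empty i)
  | cons a s ha ih =>
    rw [Finset.sum_cons, Submodule.add_eq_sup]
    rcases Finset.mem_cons.mp hi with h | h
    · exact h ▸ le_sup_left
    · exact (ih h).trans le_sup_right

lemma aux_finsum_le {ι : Type*} {s : Finset ι} {N : ι → Submodule ℂ H} {M : Submodule ℂ H}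
    (h : ∀ i ∈ s, N i ≤ M) : (∑ i ∈ s, N i) ≤ M := by
  apply Finset.sum_induction _ (fun K => K ≤ M)
  · intro p q hp hq; rw [Submodule.add_eq_sup]; exact sup_le hp hq
  · exact bot_le
  · exact h

end Aux2


section Proj
variable {H : Type*} [NormedAddCommGroup H] [InnerProductSpace ℂ H] [CompleteSpace H]
variable {n : ℕ}

/-- the factor: `Q i` if `i ∈ S`, else `1 - Q i`. -/
def fQ (Q : Fin n → H →L[ℂ] H) (S : Finset (Fin n)) (i : Fin n) : H →L[ℂ] H :=
  if i ∈ S then Q i else 1 - Q i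

variable {Q R : Fin n → H →L[ℂ] H}

lemma fQ_comm (hQcomm : ∀ i j : Fin n, Q i * Q j = Q j * Q i)
    (S S' : Finset (Fin n)) (i j : Fin n) : Commute (fQ Q S i) (fQ Q S' j) := by
  have h : Commute (Q i) (Q j) := hQcomm i j
  unfold fQ
  split <;> split
  · exact h
  · exact (Commute.one_right _).sub_right h
  · exact (Commute.one_left _).sub_left h
  · exact ((Commute.one_left _).sub_left ((Commute.one_right _).sub_right h))

lemma fQ_commQ (hQcomm : ∀ i j : Fin n, Q i * Q j = Q j * Q i)
    (S : Finset (Fin n)) (i j : Fin n) : Commute (Q j) (fQ Q S i) := by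
  have h : Commute (Q j) (Q i) := hQcomm j i
  unfold fQ
  split
  · exact h
  · exact (Commute.one_right _).sub_right h

lemma fQ_commR (hQR : ∀ i j : Fin n, R j * Q i = Q i * R j)
    (S : Finset (Fin n)) (i j : Fin n) : Commute (R j) (fQ Q S i) := by
  have h : Commute (R j) (Q i) := hQR i j
  unfold fQ
  split
  · exact h
  · exact (Commute.one_right _).sub_right h

lemma fQ_sa (hQ : ∀ i, IsSelfAdjoint (Q i) ∧ IsIdempotentElem (Q i))
    (S : Finset (Fin n)) (i : Fin n) : IsSelfAdjoint (fQ Q S i) := by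
  unfold fQ
  split
  · exact (hQ i).1
  · exact (IsSelfAdjoint.one _).sub (hQ i).1

lemma fQ_idem (hQ : ∀ i, IsSelfAdjoint (Q i) ∧ IsIdempotentElem (Q i))
    (S : Finset (Fin n)) (i : Fin n) : IsIdempotentElem (fQ Q S i) := by
  unfold fQ
  split
  · exact (hQ i).2
  · exact (hQ i).2.one_sub

lemma fQ_pairwise (hQcomm : ∀ i j : Fin n, Q i * Q j = Q j * Q i) (u S : Finset (Fin n)) :
    (u : Set (Fin n)).Pairwise (Function.onFun Commute (fQ Q S)) :=
  fun i _ j _ _ => fQ_comm hQcomm S S i j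

/-- the partial product over `u`. -/
def pP (Q : Fin n → H →L[ℂ] H) (hQcomm : ∀ i j : Fin n, Q i * Q j = Q j * Q i)
    (u S : Finset (Fin n)) : H →L[ℂ] H :=
  u.noncommProd (fQ Q S) (fQ_pairwise hQcomm u S)

variable (hQcomm : ∀ i j : Fin n, Q i * Q j = Q j * Q i)

lemma pP_commR (hQR : ∀ i j : Fin n, R j * Q i = Q i * R j) (u S : Finset (Fin n)) (j : Fin n) :
    Commute (R j) (pP Q hQcomm u S) :=
  Finset.noncommProd_commute _ _ _ _ (fun i _ => fQ_commR hQR S i j)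

lemma pP_commQ (u S : Finset (Fin n)) (j : Fin n) :
    Commute (Q j) (pP Q hQcomm u S) :=
  Finset.noncommProd_commute _ _ _ _ (fun i _ => fQ_commQ hQcomm S i j)

lemma pP_commf (u S S' : Finset (Fin n)) (j : Fin n) :
    Commute (fQ Q S' j) (pP Q hQcomm u S) :=
  Finset.noncommProd_commute _ _ _ _ (fun i _ => fQ_comm hQcomm S S' i j |>.symm)

lemma pP_cons (a : Fin n) (u S : Finset (Fin n)) (ha : a ∉ u) :
    pP Q hQcomm (Finset.cons a u ha) S = fQ Q S a * pP Q hQcomm u S := by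
  unfold pP
  rw [Finset.noncommProd_cons]

lemma pP_congr (u S S' : Finset (Fin n)) (h : ∀ x ∈ u, fQ Q S x = fQ Q S' x) :
    pP Q hQcomm u S = pP Q hQcomm u S' := by
  unfold pP
  exact Finset.noncommProd_congr rfl h _

lemma pP_sa (hQ : ∀ i, IsSelfAdjoint (Q i) ∧ IsIdempotentElem (Q i))
    (u S : Finset (Fin n)) : IsSelfAdjoint (pP Q hQcomm u S) := by
  induction u using Finset.cons_induction with
  | empty => simpa [pP] using IsSelfAdjoint.one (H →L[ℂ] H)
  | cons a u ha ih =>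
    rw [pP_cons]
    rw [IsSelfAdjoint, star_mul, ih.star_eq, (fQ_sa hQ S a).star_eq]
    exact (pP_commf hQcomm u S S a).symm.eq

lemma pP_idem (hQ : ∀ i, IsSelfAdjoint (Q i) ∧ IsIdempotentElem (Q i))
    (u S : Finset (Fin n)) : IsIdempotentElem (pP Q hQcomm u S) := by
  induction u using Finset.cons_induction with
  | empty => simpa [pP] using IsIdempotentElem.one
  | cons a u ha ih =>
    rw [pP_cons]
    exact ((fQ_idem hQ S a).mul_of_commute (pP_commf hQcomm u S S a) ih)

/-- absorption -/
lemma pP_absorb (hQ : ∀ i, IsSelfAdjoint (Q i) ∧ IsIdempotentElem (Q i))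
    (u S : Finset (Fin n)) (j : Fin n) (hj : j ∈ u) :
    Q j * pP Q hQcomm u S = if j ∈ S then pP Q hQcomm u S else 0 := by
  induction u using Finset.cons_induction with
  | empty => exact absurd hj (Finset.notMem_empty j)
  | cons a u ha ih =>
    rw [pP_cons]
    rcases Finset.mem_cons.mp hj with rfl | hj'
    · rw [← mul_assoc]
      by_cases hjS : j ∈ S
      · have : Q j * fQ Q S j = fQ Q S j := by
          unfold fQ; rw [if_pos hjS]; exact (hQ j).2
        rw [this, if_pos hjS]
      · have : Q j * fQ Q S j = 0 := by
          unfold fQ; rw [if_neg hjS, mul_sub, mul_one, (hQ j).2]; abel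
        rw [this, if_neg hjS, zero_mul]
    · rw [← mul_assoc, (fQ_commQ hQcomm S a j).eq, mul_assoc, ih hj']
      by_cases hjS : j ∈ S
      · rw [if_pos hjS, if_pos hjS]
      · rw [if_neg hjS, if_neg hjS, mul_zero]

/-- resolution of identity -/
lemma pP_sum (u : Finset (Fin n)) :
    ∑ S ∈ u.powerset, pP Q hQcomm u S = 1 := by
  classical
  induction u using Finset.induction_on with
  | empty => simp [pP]
  | insert a u ha ih =>
    rw [Finset.powerset_insert, Finset.sum_union]
    · have h1 : ∀ S ∈ u.powerset, pP Q hQcomm (insert a u) S = (1 - Q a) * pP Q hQcomm u S := by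
        intro S hS
        rw [← Finset.cons_eq_insert a u ha, pP_cons]
        congr 1
        unfold fQ
        rw [if_neg (fun h => ha (Finset.mem_powerset.mp hS h))]
      have h2 : ∀ S ∈ u.powerset, pP Q hQcomm (insert a u) (insert a S)
          = Q a * pP Q hQcomm u S := by
        intro S hS
        rw [← Finset.cons_eq_insert a u ha, pP_cons]
        have : fQ Q (insert a S) a = Q a := by unfold fQ; rw [if_pos (Finset.mem_insert_self a S)]
        rw [this]
        congr 1
        apply pP_congr
        intro x hx
        unfold fQ
        have : x ≠ a := fun h => ha (h ▸ hx)
        by_cases hxS : x ∈ S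
        · rw [if_pos (Finset.mem_insert_of_mem hxS), if_pos hxS]
        · rw [if_neg (fun h => hxS ((Finset.mem_insert.mp h).resolve_left this)), if_neg hxS]
      rw [Finset.sum_congr rfl h1, Finset.sum_image, Finset.sum_congr rfl h2,
        ← Finset.mul_sum, ← Finset.mul_sum, ih]
      · simp
      · intro x hx y hy hxy
        have hax : a ∉ x := fun h => ha (Finset.mem_powerset.mp hx h)
        have hay : a ∉ y := fun h => ha (Finset.mem_powerset.mp hy h)
        rw [← Finset.erase_insert hax, ← Finset.erase_insert hay, hxy]
    · rw [Finset.disjoint_left]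
      rintro t ht ht'
      obtain ⟨t', ht', rfl⟩ := Finset.mem_image.mp ht'
      exact ha (Finset.mem_powerset.mp ht (Finset.mem_insert_self a t'))

end Proj


/-- Let `Q₁, …, Qₙ` be pairwise commuting orthogonal projections and
`R₁, …, Rₙ` orthogonal projections on a complex Hilbert space, with `Rⱼ Qᵢ = Qᵢ Rⱼ` for
all `i, j`. If for every subset `S ⊆ {1, …, n}` the operator `∑_{j ∈ S} Rⱼ` has closed
range, then `Q₁ R₁ + ⋯ + Qₙ Rₙ` has closed range; equivalently, the algebraic sum of the
closed subspaces `ran Qᵢ ∩ ran Rᵢ` is closed. -/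
theorem stmt_18 {H : Type*} [NormedAddCommGroup H] [InnerProductSpace ℂ H] [CompleteSpace H]
    {n : ℕ} (Q R : Fin n → H →L[ℂ] H)
    (hQ : ∀ i, IsSelfAdjoint (Q i) ∧ IsIdempotentElem (Q i))
    (hQcomm : ∀ i j : Fin n, Q i * Q j = Q j * Q i)
    (hR : ∀ j, IsSelfAdjoint (R j) ∧ IsIdempotentElem (R j))
    (hQR : ∀ i j : Fin n, R j * Q i = Q i * R j)
    (hSr : ∀ S : Finset (Fin n), IsClosed (Set.range ⇑(∑ j ∈ S, R j))) :
    IsClosed (Set.range ⇑(∑ j, Q j * R j)) ∧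
    IsClosed ((∑ j, (LinearMap.range (Q j : H →ₗ[ℂ] H) ⊓ LinearMap.range (R j : H →ₗ[ℂ] H)) :
      Submodule ℂ H) : Set H) := by
  classical
  set A : H →L[ℂ] H := ∑ j, Q j * R j with hA
  set P : Finset (Fin n) → (H →L[ℂ] H) := fun S => pP Q hQcomm Finset.univ S with hP
  set T : Finset (Fin n) → (H →L[ℂ] H) := fun S => ∑ j ∈ S, R j with hT
  set pw : Finset (Finset (Fin n)) := (Finset.univ : Finset (Fin n)).powerset with hpw
  -- basic facts
  have hTsa : ∀ S, IsSelfAdjoint (T S) := by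
    intro S
    rw [hT]
    simp only [IsSelfAdjoint, star_sum]
    exact Finset.sum_congr rfl fun j _ => (hR j).1.star_eq
  have hTclosed : ∀ S, IsClosed (Set.range ⇑(T S)) := fun S => hSr S
  have hTcommP : ∀ S S', Commute (T S) (P S') := by
    intro S S'
    rw [hT]
    exact Commute.sum_left _ _ _ fun j _ => pP_commR hQcomm hQR _ _ j
  have hPsa : ∀ S, IsSelfAdjoint (P S) := fun S => pP_sa hQcomm hQ _ _
  have hPidem : ∀ S, IsIdempotentElem (P S) := fun S => pP_idem hQcomm hQ _ _
  have habsorb : ∀ S j, Q j * P S = if j ∈ S then P S else 0 := fun S j =>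
    pP_absorb hQcomm hQ Finset.univ S j (Finset.mem_univ j)
  have hPabsorb' : ∀ S j, P S * Q j = if j ∈ S then P S else 0 := fun S j => by
    rw [← (pP_commQ hQcomm Finset.univ S j).eq]; exact habsorb S j
  -- key identity
  have key : ∀ S, A * P S = T S * P S := by
    intro S
    rw [hA, hT, Finset.sum_mul, Finset.sum_mul]
    have h1 : ∀ j : Fin n, Q j * R j * P S = if j ∈ S then R j * P S else 0 := by
      intro j
      rw [mul_assoc, (pP_commR hQcomm hQR Finset.univ S j).eq, ← mul_assoc, habsorb S j]
      split
      · rfl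
      · rw [zero_mul]
    rw [Finset.sum_congr rfl fun j _ => h1 j, Finset.sum_ite_mem, Finset.univ_inter]
  -- PP orthogonality
  have hPP : ∀ S S', S ≠ S' → P S * P S' = 0 := by
    intro S S' hne
    have : ∃ i, ¬ (i ∈ S ↔ i ∈ S') := by
      by_contra h
      push_neg at h
      exact hne (Finset.ext fun i => (h i))
    obtain ⟨i, hi⟩ := this
    rcases Decidable.em (i ∈ S) with hiS | hiS
    · have hiS' : i ∉ S' := fun h => hi ⟨fun _ => h, fun _ => hiS⟩
      calc P S * P S' = (P S * Q i) * P S' := by rw [hPabsorb' S i, if_pos hiS]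
        _ = P S * (Q i * P S') := by rw [mul_assoc]
        _ = 0 := by rw [habsorb S' i, if_neg hiS', mul_zero]
    · have hiS' : i ∈ S' := by
        rcases Decidable.em (i ∈ S') with h | h
        · exact h
        · exact absurd ⟨fun a => absurd a hiS, fun a => absurd a h⟩ hi
      calc P S * P S' = P S * (Q i * P S') := by rw [habsorb S' i, if_pos hiS']
        _ = (P S * Q i) * P S' := by rw [mul_assoc]
        _ = 0 := by rw [hPabsorb' S i, if_neg hiS, zero_mul]
  -- range of T S * P S as a set
  have hrangeTP : ∀ S, (LinearMap.range ((T S * P S : H →L[ℂ] H) : H →ₗ[ℂ] H) : Set H)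
      = Set.range ⇑(T S) ∩ Set.range ⇑(P S) := by
    intro S
    ext x
    simp only [SetLike.mem_coe, LinearMap.mem_range, Set.mem_inter_iff, Set.mem_range, ContinuousLinearMap.coe_coe]
    constructor
    · rintro ⟨y, rfl⟩
      refine ⟨⟨P S y, rfl⟩, ⟨T S y, ?_⟩⟩
      have := congrArg (fun F : H →L[ℂ] H => F y) (hTcommP S S).eq
      simpa using this.symm
    · rintro ⟨⟨y, rfl⟩, hx⟩
      refine ⟨y, ?_⟩
      have hfix : P S (T S y) = T S y := aux_fixed (hPidem S) (by
        obtain ⟨z, hz⟩ := hx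
        exact ⟨z, hz⟩)
      have hc := congrArg (fun F : H →L[ℂ] H => F y) (hTcommP S S).eq
      rw [hc]
      simpa using hfix
  have hWclosed : ∀ S, IsClosed ((LinearMap.range ((T S * P S : H →L[ℂ] H) : H →ₗ[ℂ] H) : Submodule ℂ H) : Set H) := by
    intro S
    rw [hrangeTP S]
    exact (hTclosed S).inter (aux_idem_range_closed (hPidem S))
  -- orthogonality of the W's
  have horth : ∀ S S', S ≠ S' →
      LinearMap.range ((T S * P S : H →L[ℂ] H) : H →ₗ[ℂ] H) ≤ (LinearMap.range ((T S' * P S' : H →L[ℂ] H) : H →ₗ[ℂ] H))ᗮ := by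
    intro S S' hne x hx
    rw [Submodule.mem_orthogonal]
    rintro u ⟨z, rfl⟩
    obtain ⟨y, rfl⟩ := hx
    have hxPS : (T S * P S) y = P S (T S y) := by
      have := congrArg (fun F : H →L[ℂ] H => F y) (hTcommP S S).eq
      simpa using this
    have huPS : (T S' * P S') z = P S' (T S' z) := by
      have := congrArg (fun F : H →L[ℂ] H => F z) (hTcommP S' S').eq
      simpa using this
    simp only [ContinuousLinearMap.coe_coe]
    rw [hxPS, huPS, aux_sa_inner (hPsa S'), ← ContinuousLinearMap.comp_apply,
      ← ContinuousLinearMap.mul_def, hPP S' S hne.symm]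
    simp
  -- range A = sum of ranges of T S * P S
  have hAsum : A = ∑ S ∈ pw, T S * P S := by
    calc A = A * ∑ S ∈ pw, P S := by rw [hP, hpw, pP_sum hQcomm, mul_one]
    _ = ∑ S ∈ pw, A * P S := Finset.mul_sum _ _ _
    _ = ∑ S ∈ pw, T S * P S := Finset.sum_congr rfl fun S _ => key S
  have hrangeA : LinearMap.range (A : H →ₗ[ℂ] H) = ∑ S ∈ pw, LinearMap.range ((T S * P S : H →L[ℂ] H) : H →ₗ[ℂ] H) := by
    apply le_antisymm
    · rintro x ⟨y, rfl⟩
      have : A y = ∑ S ∈ pw, (T S * P S) y := by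
        rw [hAsum]; exact ContinuousLinearMap.sum_apply _ _ _
      rw [ContinuousLinearMap.coe_coe, this]
      exact Submodule.sum_mem _ fun S hS => aux_le_finsum hS ⟨y, rfl⟩
    · apply aux_finsum_le
      rintro S _ x ⟨y, rfl⟩
      refine ⟨P S y, ?_⟩
      have := congrArg (fun F : H →L[ℂ] H => F y) (key S)
      simpa using this
  have hclosedA : IsClosed ((LinearMap.range (A : H →ₗ[ℂ] H) : Submodule ℂ H) : Set H) := by
    rw [hrangeA]
    exact aux_orthsum_closed pw _ (fun S _ => hWclosed S)
      (fun S _ S' _ hne => horth S S' hne)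
  -- R j range ≤ T S range for j ∈ S
  have hRleT : ∀ S : Finset (Fin n), ∀ j ∈ S, LinearMap.range (R j : H →ₗ[ℂ] H) ≤ LinearMap.range (T S : H →ₗ[ℂ] H) := by
    intro S j hj
    have hker : LinearMap.ker (T S : H →ₗ[ℂ] H) ≤ LinearMap.ker (R j : H →ₗ[ℂ] H) := by
      intro x hx
      have hx0 : T S x = 0 := LinearMap.mem_ker.mp hx
      have h1 : ⟪T S x, x⟫_ℂ = 0 := by rw [hx0, inner_zero_left]
      have h2 : ⟪T S x, x⟫_ℂ = ((∑ k ∈ S, ‖R k x‖ ^ 2 : ℝ) : ℂ) := by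
        rw [hT]
        simp only [ContinuousLinearMap.sum_apply]
        rw [sum_inner]
        push_cast
        refine Finset.sum_congr rfl fun k _ => ?_
        have hfix : R k x = R k (R k x) := by
          have := congrArg (fun F : H →L[ℂ] H => F x) (hR k).2
          simpa using this.symm
        calc ⟪R k x, x⟫_ℂ = ⟪R k (R k x), x⟫_ℂ := by rw [← hfix]
          _ = ⟪R k x, R k x⟫_ℂ := aux_sa_inner (hR k).1 _ _
          _ = ((‖R k x‖ : ℂ)) ^ 2 := inner_self_eq_norm_sq_to_K _
      have h3 : (∑ k ∈ S, ‖R k x‖ ^ 2) = (0 : ℝ) := by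
        have h4 := h2.symm.trans h1
        exact_mod_cast h4
      have h5 : ‖R j x‖ ^ 2 = 0 :=
        (Finset.sum_eq_zero_iff_of_nonneg fun k _ => sq_nonneg _).mp h3 j hj
      have h6 : R j x = 0 := by
        rw [pow_eq_zero_iff (two_ne_zero), norm_eq_zero] at h5
        exact h5
      exact LinearMap.mem_ker.mpr h6
    rw [aux_range_eq_ker_orth (hR j).1 (aux_idem_range_closed (hR j).2),
      aux_range_eq_ker_orth (hTsa S) (hTclosed S)]
    exact Submodule.orthogonal_le hker
  -- range of Q j * R j
  have hQRrange : ∀ j, LinearMap.range (Q j : H →ₗ[ℂ] H) ⊓ LinearMap.range (R j : H →ₗ[ℂ] H)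
      = LinearMap.range ((Q j * R j : H →L[ℂ] H) : H →ₗ[ℂ] H) := by
    intro j
    apply le_antisymm
    · rintro x ⟨hx1, hx2⟩
      refine ⟨x, ?_⟩
      have h1 : R j x = x := aux_fixed (hR j).2 hx2
      have h2 : Q j x = x := aux_fixed (hQ j).2 hx1
      simp [h1, h2]
    · rintro x ⟨y, rfl⟩
      constructor
      · exact ⟨R j y, by simp⟩
      · refine ⟨Q j y, ?_⟩
        have := congrArg (fun F : H →L[ℂ] H => F y) (hQR j j)
        simpa using this
  -- the submodule sum equals range A
  have hfinal : (∑ j, (LinearMap.range (Q j : H →ₗ[ℂ] H) ⊓ LinearMap.range (R j : H →ₗ[ℂ] H)) : Submodule ℂ H)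
      = LinearMap.range (A : H →ₗ[ℂ] H) := by
    apply le_antisymm
    · apply aux_finsum_le
      intro j _
      rw [hQRrange j]
      rintro x ⟨y, rfl⟩
      -- decompose x = ∑_S P S x
      have hx : (Q j * R j) y = ∑ S ∈ pw, P S ((Q j * R j) y) := by
        have h0 := congrArg (fun F : H →L[ℂ] H => F ((Q j * R j) y)) (pP_sum hQcomm (Finset.univ : Finset (Fin n)))
        simp only [ContinuousLinearMap.sum_apply, ContinuousLinearMap.one_apply] at h0
        exact h0.symm
      rw [ContinuousLinearMap.coe_coe, hx]
      apply Submodule.sum_mem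
      intro S hS
      rw [hrangeA]
      refine aux_le_finsum hS ?_
      -- P S ((Q j R j) y) ∈ range (T S * P S)
      by_cases hjS : j ∈ S
      · have hPQR : P S * (Q j * R j) = R j * P S := by
          rw [← mul_assoc, hPabsorb' S j, if_pos hjS, ← (pP_commR hQcomm hQR Finset.univ S j).eq]
        have hval : P S ((Q j * R j) y) = R j (P S y) := by
          have := congrArg (fun F : H →L[ℂ] H => F y) hPQR
          simpa using this
        have hmem : P S ((Q j * R j) y) ∈ (LinearMap.range ((T S * P S : H →L[ℂ] H) : H →ₗ[ℂ] H) : Set H) := by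
          rw [hrangeTP S]
          constructor
          · have : R j (P S y) ∈ LinearMap.range (T S : H →ₗ[ℂ] H) :=
              hRleT S j hjS ⟨P S y, rfl⟩
            rw [hval]
            obtain ⟨z, hz⟩ := this
            exact ⟨z, hz⟩
          · exact ⟨(Q j * R j) y, rfl⟩
        exact hmem
      · have hPQR : P S * (Q j * R j) = 0 := by
          rw [← mul_assoc, hPabsorb' S j, if_neg hjS, zero_mul]
        have hval : P S ((Q j * R j) y) = 0 := by
          have := congrArg (fun F : H →L[ℂ] H => F y) hPQR
          simpa using this
        rw [hval]
        exact Submodule.zero_mem _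
    · rintro x ⟨y, rfl⟩
      have : A y = ∑ j, (Q j * R j) y := by
        rw [hA]; exact ContinuousLinearMap.sum_apply _ _ _
      rw [ContinuousLinearMap.coe_coe, this]
      apply Submodule.sum_mem
      intro j _
      refine aux_le_finsum (Finset.mem_univ j) ?_
      rw [hQRrange j]
      exact ⟨y, rfl⟩
  constructor
  · rw [show Set.range ⇑A = ((LinearMap.range (A : H →ₗ[ℂ] H) : Submodule ℂ H) : Set H) from
      (LinearMap.coe_range _).symm]
    exact hclosedA
  · rw [hfinal]
    exact hclosedA
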